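/- Let x : [0,1] → ℝ be twice differentiable and convex (x''(l) ≥ 0) with x(l) > 0 for all l ∈ [0,1] and x(1) = 1, and let k ≥ 1 be an integer. Then on any subinterval of [0,1) on which x(l)^k > l, both of the functions l ↦ (l + 1 − 2·x(l)^k)/(x(l)^k − l) and l ↦ (1 − x(l)^k)/(x(l)^k − l) are nondecreasing in l. -/
import Mathlib


/-- Let `x : [0,1] → ℝ` be twice differentiable and convex (`x'' ≥ 0`) with `x > 0` on
`[0,1]` and `x 1 = 1`, and let `k ≥ 1`. On any subinterval of `[0,1)` on which
`x(l)^k > l`, both `l ↦ (l + 1 − 2·x(l)^k)/(x(l)^k − l)` and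
`l ↦ (1 − x(l)^k)/(x(l)^k − l)` are nondecreasing in `l`. -/
theorem signal_ratio_fractions_monotone (x x' x'' : ℝ → ℝ)
    (hderiv : ∀ l ∈ Set.Icc (0 : ℝ) 1, HasDerivAt x (x' l) l)
    (hderiv' : ∀ l ∈ Set.Icc (0 : ℝ) 1, HasDerivAt x' (x'' l) l)
    (hconvex : ∀ l ∈ Set.Icc (0 : ℝ) 1, 0 ≤ x'' l)
    (hpos : ∀ l ∈ Set.Icc (0 : ℝ) 1, 0 < x l)
    (hone : x 1 = 1)
    (k : ℕ) (hk : 1 ≤ k) :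
    ∀ l₁ l₂ : ℝ, 0 ≤ l₁ → l₁ ≤ l₂ → l₂ < 1 →
      (∀ l ∈ Set.Icc l₁ l₂, l < x l ^ k) →
      ((l₁ + 1 - 2 * x l₁ ^ k) / (x l₁ ^ k - l₁)
          ≤ (l₂ + 1 - 2 * x l₂ ^ k) / (x l₂ ^ k - l₂))
      ∧ ((1 - x l₁ ^ k) / (x l₁ ^ k - l₁) ≤ (1 - x l₂ ^ k) / (x l₂ ^ k - l₂)) := by
  -- `x` is convex on `[0,1]`
  have hxconv : ConvexOn ℝ (Set.Icc (0 : ℝ) 1) x := by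
    apply convexOn_of_hasDerivWithinAt2_nonneg (convex_Icc 0 1)
      (f' := x') (f'' := x'')
    · exact fun l hl => (hderiv l hl).continuousAt.continuousWithinAt
    · intro l hl
      exact (hderiv l (interior_subset hl)).hasDerivWithinAt
    · intro l hl
      exact (hderiv' l (interior_subset hl)).hasDerivWithinAt
    · intro l hl
      exact hconvex l (interior_subset hl)
  -- hence `σ = x ^ k` is convex on `[0,1]`
  have hσconv : ConvexOn ℝ (Set.Icc (0 : ℝ) 1) (fun l => x l ^ k) := by
    refine ⟨convex_Icc 0 1, ?_⟩
    intro a ha b hb p q hp hq hpq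
    have hxa := (hpos a ha).le
    have hxb := (hpos b hb).le
    have hmem : p • a + q • b ∈ Set.Icc (0 : ℝ) 1 :=
      (convex_Icc 0 1) ha hb hp hq hpq
    have h1 : x (p • a + q • b) ≤ p * x a + q * x b := hxconv.2 ha hb hp hq hpq
    have h0 : 0 ≤ x (p • a + q • b) := (hpos _ hmem).le
    have h2 : x (p • a + q • b) ^ k ≤ (p * x a + q * x b) ^ k :=
      pow_le_pow_left₀ h0 h1 k
    have h3 : (p * x a + q * x b) ^ k ≤ p * x a ^ k + q * x b ^ k := by
      have := (convexOn_pow k).2 (Set.mem_Ici.mpr hxa) (Set.mem_Ici.mpr hxb) hp hq hpq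
      simpa [smul_eq_mul] using this
    simpa [smul_eq_mul] using h2.trans h3
  intro l₁ l₂ h0 h12 h21 hgt
  have hl₁1 : l₁ < 1 := lt_of_le_of_lt h12 h21
  have hl₁ : l₁ ∈ Set.Icc (0 : ℝ) 1 := ⟨h0, hl₁1.le⟩
  have hl₂ : l₂ ∈ Set.Icc (0 : ℝ) 1 := ⟨le_trans h0 h12, h21.le⟩
  have hd₁ : 0 < x l₁ ^ k - l₁ := by
    have := hgt l₁ ⟨le_refl _, h12⟩; linarith
  have hd₂ : 0 < x l₂ ^ k - l₂ := by
    have := hgt l₂ ⟨h12, le_refl _⟩; linarith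
  -- chord slope monotonicity
  have hsec : (x l₁ ^ k - 1) / (l₁ - 1) ≤ (x l₂ ^ k - 1) / (l₂ - 1) := by
    have := hσconv.secant_mono (a := 1) (x := l₁) (y := l₂)
      (Set.right_mem_Icc.mpr zero_le_one) hl₁ hl₂ hl₁1.ne h21.ne h12
    simpa [hone] using this
  have hA : (1 - x l₁ ^ k) * (1 - l₂) ≤ (1 - x l₂ ^ k) * (1 - l₁) := by
    have e₁ : (x l₁ ^ k - 1) / (l₁ - 1) = (1 - x l₁ ^ k) / (1 - l₁) := by
      rw [← neg_div_neg_eq]; ring_nf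
    have e₂ : (x l₂ ^ k - 1) / (l₂ - 1) = (1 - x l₂ ^ k) / (1 - l₂) := by
      rw [← neg_div_neg_eq]; ring_nf
    rw [e₁, e₂] at hsec
    have h1p : (0:ℝ) < 1 - l₁ := by linarith
    have h2p : (0:ℝ) < 1 - l₂ := by linarith
    exact (div_le_div_iff₀ h1p h2p).mp hsec
  have hsecond : (1 - x l₁ ^ k) / (x l₁ ^ k - l₁) ≤ (1 - x l₂ ^ k) / (x l₂ ^ k - l₂) := by
    rw [div_le_div_iff₀ hd₁ hd₂]
    nlinarith [hA]
  refine ⟨?_, hsecond⟩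
  have e₁ : (l₁ + 1 - 2 * x l₁ ^ k) / (x l₁ ^ k - l₁)
      = (1 - x l₁ ^ k) / (x l₁ ^ k - l₁) - 1 := by
    field_simp; ring
  have e₂ : (l₂ + 1 - 2 * x l₂ ^ k) / (x l₂ ^ k - l₂)
      = (1 - x l₂ ^ k) / (x l₂ ^ k - l₂) - 1 := by
    field_simp; ring
  rw [e₁, e₂]
  linarith
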